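/- Let μ = (a+1, b-1) with a+1 > b-1 and b ≥ 3, and for 2 ≤ i < j ≤ b-1 let w_{ij} = (a, 1^{i-2}, 2, 1^{j-1-i}, 2, 1^{b-1-j}) (content: a copies of 1, two copies each of i and j, and one copy of every other entry in {2,…,b-1}). Then the number of standard tableaux of shape μ and content w_{ij} equals b-2. -/

import Mathlib

/-- A standard tableau of two-row shape `(μ₁, μ₂)` with entries in `{1, …, n}`:
rows weakly increase left to right, columns strictly increase top to bottom. -/
structure TwoRowStandardTableau (μ1 μ2 n : ℕ) where
  row1 : Fin μ1 → ℕ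
  row2 : Fin μ2 → ℕ
  row1_mem : ∀ p, 1 ≤ row1 p ∧ row1 p ≤ n
  row2_mem : ∀ p, 1 ≤ row2 p ∧ row2 p ≤ n
  row1_mono : Monotone row1
  row2_mono : Monotone row2
  col_strict : ∀ (p : Fin μ2) (h : (p : ℕ) < μ1), row1 ⟨(p : ℕ), h⟩ < row2 p

/-- The content of a tableau: the number of occurrences of the entry `k`. -/
def TwoRowStandardTableau.content {μ1 μ2 n : ℕ} (T : TwoRowStandardTableau μ1 μ2 n)
    (k : ℕ) : ℕ :=
  (Finset.univ.filter fun p => T.row1 p = k).card +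
    (Finset.univ.filter fun p => T.row2 p = k).card


open Finset
set_option linter.unusedSectionVars false

namespace Stmt11Aux

/-- A down-closed subset of `Fin N` is an initial segment. -/
lemma mem_iff_lt_card {N : ℕ} (S : Finset (Fin N))
    (hS : ∀ q ∈ S, ∀ q', q' ≤ q → q' ∈ S) (p : Fin N) :
    p ∈ S ↔ (p : ℕ) < S.card := by
  constructor
  · intro hp
    have h1 : Finset.Iic p ⊆ S := fun q hq => hS p hp q (Finset.mem_Iic.mp hq)
    have := Finset.card_le_card h1
    rw [Fin.card_Iic] at this
    omega
  · intro hp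
    by_contra hpn
    have hsub : S ⊆ Finset.Iio p := by
      intro q hq
      rw [Finset.mem_Iio]
      rcases lt_or_ge q p with h | h
      · exact h
      · exact absurd (hS q hq p h) hpn
    have := Finset.card_le_card hsub
    rw [Fin.card_Iio] at this
    omega

lemma le_iff_lt_card {N : ℕ} {f : Fin N → ℕ} (hf : Monotone f) (p : Fin N) (k : ℕ) :
    f p ≤ k ↔ (p : ℕ) < (Finset.univ.filter fun q => f q ≤ k).card := by
  refine mem_iff_lt_card _ (fun q hq q' hq' => ?_) p |>.symm.trans ?_ |>.symm
  · simp only [Finset.mem_filter, Finset.mem_univ, true_and] at hq ⊢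
    exact le_trans (hf hq') hq
  · simp

lemma cardLe_eq_sum {N : ℕ} (f : Fin N → ℕ) (k : ℕ) :
    (Finset.univ.filter fun q => f q ≤ k).card
      = ∑ v ∈ Finset.range (k + 1), (Finset.univ.filter fun q => f q = v).card := by
  rw [← Finset.card_biUnion]
  · congr 1
    ext q
    simp [Nat.lt_succ_iff]
  · intro x hx y hy hxy
    rw [Function.onFun, Finset.disjoint_left]
    intro q hq1 hq2
    simp only [Finset.mem_filter] at hq1 hq2
    exact hxy (hq1.2 ▸ hq2.2.symm ▸ rfl)

/-- Two monotone functions `Fin N → ℕ` with the same value counts are equal. -/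
lemma mono_eq_of_counts {N : ℕ} {f g : Fin N → ℕ} (hf : Monotone f) (hg : Monotone g)
    (h : ∀ k, (Finset.univ.filter fun q => f q = k).card
      = (Finset.univ.filter fun q => g q = k).card) : f = g := by
  funext p
  have key : ∀ k, (f p ≤ k ↔ g p ≤ k) := by
    intro k
    rw [le_iff_lt_card hf, le_iff_lt_card hg, cardLe_eq_sum, cardLe_eq_sum]
    simp_rw [h]
  exact le_antisymm ((key (g p)).mpr le_rfl) ((key (f p)).mp le_rfl)

lemma card_filter_fin {N : ℕ} (P : ℕ → Prop) [DecidablePred P] :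
    (Finset.univ.filter fun q : Fin N => P q.val).card = ((Finset.range N).filter P).card := by
  refine Finset.card_nbij Fin.val (fun q _ => ?_) (fun q _ q' _ h => Fin.ext h) ?_
  · simp only [Finset.mem_coe, Finset.mem_filter, Finset.mem_univ, true_and] at *
    exact ⟨Finset.mem_range.mpr q.isLt, ‹_›⟩
  · intro q hq
    simp only [Finset.coe_filter, Finset.mem_range, Set.mem_setOf_eq, Finset.mem_coe,
      Finset.mem_univ, true_and] at hq ⊢
    exact ⟨⟨q, hq.1⟩, hq.2, rfl⟩

/-- Counting occurrences of `k` from a cumulative-count function `L`. -/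
lemma count_from_cum {N : ℕ} (f : ℕ → ℕ) (L : ℕ → ℕ) (hL : ∀ k, L k ≤ N)
    (hL0 : L 0 = 0)
    (h : ∀ k q, q < N → (f q ≤ k ↔ q < L k)) (k : ℕ) :
    ((Finset.range N).filter fun q => f q = k).card = L k - L (k - 1) := by
  have hrange : ∀ m, (Finset.range N).filter (fun q => f q ≤ m) = Finset.range (L m) := by
    intro m
    ext q
    simp only [Finset.mem_filter, Finset.mem_range]
    constructor
    · rintro ⟨h1, h2⟩; exact (h m q h1).mp h2
    · intro hq
      have h1 : q < N := lt_of_lt_of_le hq (hL m)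
      exact ⟨h1, (h m q h1).mpr hq⟩
  have hmono : L (k - 1) ≤ L k := by
    by_contra hc
    push_neg at hc
    have hqN : L k < N := lt_of_lt_of_le hc (hL _)
    have h1 : f (L k) ≤ k - 1 := (h (k - 1) (L k) hqN).mpr hc
    have h2 : L k < L k := (h k (L k) hqN).mp (le_trans h1 (Nat.sub_le k 1))
    omega
  rcases Nat.eq_zero_or_pos k with rfl | hk
  · have heq0 : ((Finset.range N).filter fun q => f q = 0)
        = (Finset.range N).filter (fun q => f q ≤ 0) := by
      ext q; simp only [Finset.mem_filter, Finset.mem_range]; omega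
    rw [heq0, hrange, hL0]
    simp
  · have heq : ((Finset.range N).filter fun q => f q = k)
        = (Finset.range N).filter (fun q => f q ≤ k) \ (Finset.range N).filter (fun q => f q ≤ k - 1) := by
      ext q
      simp only [Finset.mem_sdiff, Finset.mem_filter, Finset.mem_range]
      omega
    rw [heq, hrange, hrange, Finset.card_sdiff_of_subset (Finset.range_subset_range.mpr hmono),
      Finset.card_range, Finset.card_range]

end Stmt11Aux

namespace Stmt11Aux

def sfun (i j q : ℕ) : ℕ := if q + 2 ≤ i then q + 2 else if q + 1 ≤ j then q + 1 else q
def posm (i j m : ℕ) : ℕ := if m ≤ i then m - 2 else if m ≤ j then m - 1 else m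
def r2 (i j m q : ℕ) : ℕ := if q < posm i j m then sfun i j q else sfun i j (q + 1)
def r1 (a m q : ℕ) : ℕ := if q < a then 1 else m
def tLe (b i j m k : ℕ) : ℕ :=
  min k (b - 1) - 1 + (if i ≤ k then 1 else 0) + (if j ≤ k then 1 else 0)
    - (if m ≤ k then 1 else 0)
def uLe (a m k : ℕ) : ℕ := if m ≤ k then a + 1 else if 1 ≤ k then a else 0
def target (a b i j k : ℕ) : ℕ :=
  if k = 1 then a else if k = i ∨ k = j then 2
  else if 2 ≤ k ∧ k ≤ b - 1 then 1 else 0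

section
variable {a b i j m : ℕ} (hb : 3 ≤ b) (hi : 2 ≤ i) (hij : i < j) (hjb : j ≤ b - 1)
  (hm2 : 2 ≤ m) (hmb : m ≤ b - 1)

include hb hi hij hjb hm2 hmb in
lemma r2_le_iff (k q : ℕ) (hq : q < b - 1) : r2 i j m q ≤ k ↔ q < tLe b i j m k := by
  unfold r2 sfun posm tLe
  split_ifs <;> omega

include hb hi hij hjb hm2 hmb in
lemma tLe_le (k : ℕ) : tLe b i j m k ≤ b - 1 := by
  unfold tLe; split_ifs <;> omega

include hb hi hij hjb hm2 hmb in
lemma tLe_zero : tLe b i j m 0 = 0 := by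
  unfold tLe; split_ifs <;> omega

include hm2 in
lemma r1_le_iff (k q : ℕ) (hq : q < a + 1) : r1 a m q ≤ k ↔ q < uLe a m k := by
  unfold r1 uLe; split_ifs <;> omega

include hm2 in
lemma uLe_le (k : ℕ) : uLe a m k ≤ a + 1 := by unfold uLe; split_ifs <;> omega

include hm2 in
lemma uLe_zero : uLe a m 0 = 0 := by unfold uLe; split_ifs <;> omega

include hb hi hij hjb hm2 hmb in
lemma r2_mono : Monotone (fun p : Fin (b - 1) => r2 i j m p.val) := by
  intro p q hpq
  have hpq' : (p : ℕ) ≤ (q : ℕ) := hpq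
  simp only [r2, sfun, posm]
  split_ifs <;> omega

include hm2 in
lemma r1_mono : Monotone (fun p : Fin (a + 1) => r1 a m p.val) := by
  intro p q hpq
  have hpq' : (p : ℕ) ≤ (q : ℕ) := hpq
  simp only [r1]
  split_ifs <;> omega

include hb hi hij hjb hm2 hmb in
lemma cnt2_eq (k : ℕ) :
    (Finset.univ.filter fun p : Fin (b - 1) => r2 i j m p.val = k).card
      = tLe b i j m k - tLe b i j m (k - 1) := by
  exact (card_filter_fin _).trans <| count_from_cum _ _ (fun k => tLe_le hb hi hij hjb hm2 hmb k)
    (tLe_zero hb hi hij hjb hm2 hmb)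
    (fun k q hq => r2_le_iff hb hi hij hjb hm2 hmb k q hq) k

include hm2 in
lemma cnt1_eq (k : ℕ) :
    (Finset.univ.filter fun p : Fin (a + 1) => r1 a m p.val = k).card
      = uLe a m k - uLe a m (k - 1) := by
  exact (card_filter_fin _).trans <| count_from_cum _ _ (fun k => uLe_le hm2 k) (uLe_zero hm2)
    (fun k q hq => r1_le_iff hm2 k q hq) k

set_option maxHeartbeats 2000000 in
include hb hi hij hjb hm2 hmb in
lemma sum_eq_target (k : ℕ) :
    (uLe a m k - uLe a m (k - 1)) + (tLe b i j m k - tLe b i j m (k - 1))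
      = target a b i j k := by
  unfold uLe tLe target
  split_ifs <;> omega

end

end Stmt11Aux

namespace Stmt11Aux

lemma ext' {μ1 μ2 n : ℕ} {T T' : TwoRowStandardTableau μ1 μ2 n}
    (h1 : T.row1 = T'.row1) (h2 : T.row2 = T'.row2) : T = T' := by
  cases T; cases T'
  simp only at h1 h2
  subst h1; subst h2
  rfl

variable (a b i j n m : ℕ)

/-- The tableau with `row1 = (1^a, m)` and `row2` the sorted remaining entries. -/
def mk (hb : 3 ≤ b) (hi : 2 ≤ i) (hij : i < j) (hjb : j ≤ b - 1)
    (hμ : b - 1 < a + 1) (hn : a + b ≤ n) (hm2 : 2 ≤ m) (hmb : m ≤ b - 1) :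
    TwoRowStandardTableau (a + 1) (b - 1) n where
  row1 := fun p => r1 a m p.val
  row2 := fun p => r2 i j m p.val
  row1_mem := by
    intro p
    simp only [r1]
    split_ifs <;> omega
  row2_mem := by
    intro p
    have hp : (p : ℕ) < b - 1 := p.isLt
    simp only [r2, sfun, posm]
    split_ifs <;> omega
  row1_mono := r1_mono hm2
  row2_mono := r2_mono hb hi hij hjb hm2 hmb
  col_strict := by
    intro p h
    have hp : (p : ℕ) < b - 1 := p.isLt
    simp only [r1, r2, sfun, posm]
    split_ifs <;> omega

variable {a b i j n m} {hb : 3 ≤ b} {hi : 2 ≤ i} {hij : i < j} {hjb : j ≤ b - 1}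
  {hμ : b - 1 < a + 1} {hn : a + b ≤ n} {hm2 : 2 ≤ m} {hmb : m ≤ b - 1}

lemma content_mk (k : ℕ) :
    (mk a b i j n m hb hi hij hjb hμ hn hm2 hmb).content k = target a b i j k := by
  show (Finset.univ.filter fun p : Fin (a+1) => r1 a m p.val = k).card
      + (Finset.univ.filter fun p : Fin (b-1) => r2 i j m p.val = k).card = _
  rw [cnt1_eq hm2, cnt2_eq hb hi hij hjb hm2 hmb]
  exact sum_eq_target hb hi hij hjb hm2 hmb k

variable (T : TwoRowStandardTableau (a + 1) (b - 1) n)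
  (hT : ∀ k, T.content k = target a b i j k)

include hb hi hij hjb hμ hn hT in
lemma classify :
    ∃ (h2 : 2 ≤ T.row1 ⟨a, Nat.lt_succ_self a⟩) (hb' : T.row1 ⟨a, Nat.lt_succ_self a⟩ ≤ b - 1),
      T = mk a b i j n (T.row1 ⟨a, Nat.lt_succ_self a⟩) hb hi hij hjb hμ hn h2 hb' := by
  set m' := T.row1 ⟨a, Nat.lt_succ_self a⟩ with hm'
  -- row2 entries are at least 2
  have hrow2ge : ∀ p : Fin (b - 1), 2 ≤ T.row2 p := by
    intro p
    have h1 := T.col_strict p (by omega)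
    have h2 := (T.row1_mem ⟨(p : ℕ), by omega⟩).1
    omega
  -- count of 1 in row1 is a
  have hc1 : (Finset.univ.filter fun p : Fin (a + 1) => T.row1 p = 1).card = a := by
    have h1 := hT 1
    have h2 : (Finset.univ.filter fun p : Fin (b - 1) => T.row2 p = 1).card = 0 := by
      rw [Finset.card_eq_zero, Finset.filter_eq_empty_iff]
      intro p _
      have := hrow2ge p
      omega
    simp only [TwoRowStandardTableau.content, target, if_pos rfl, h2, add_zero] at h1
    exact h1
  -- row1 p = 1 iff p < a
  have key : ∀ p : Fin (a + 1), T.row1 p = 1 ↔ (p : ℕ) < a := by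
    intro p
    have hfeq : (Finset.univ.filter fun q : Fin (a + 1) => T.row1 q ≤ 1)
        = Finset.univ.filter fun q : Fin (a + 1) => T.row1 q = 1 := by
      ext q
      have := (T.row1_mem q).1
      simp only [Finset.mem_filter, Finset.mem_univ, true_and]
      omega
    have h1 := le_iff_lt_card T.row1_mono p 1
    rw [hfeq, hc1] at h1
    have := (T.row1_mem p).1
    constructor
    · intro h; exact h1.mp (le_of_eq h)
    · intro h; have := h1.mpr h; omega
  have hm'2 : 2 ≤ m' := by
    have h1 := key ⟨a, Nat.lt_succ_self a⟩
    have h2 := (T.row1_mem ⟨a, Nat.lt_succ_self a⟩).1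
    simp only [← hm'] at h1 h2 ⊢
    omega
  have hm'b : m' ≤ b - 1 := by
    have hpos : 0 < (Finset.univ.filter fun p : Fin (a + 1) => T.row1 p = m').card :=
      Finset.card_pos.mpr ⟨⟨a, Nat.lt_succ_self a⟩, by
        simp only [Finset.mem_filter, Finset.mem_univ, true_and, hm']⟩
    have h1 := hT m'
    simp only [TwoRowStandardTableau.content, target] at h1
    split_ifs at h1 <;> omega
  refine ⟨hm'2, hm'b, ?_⟩
  -- row1 agrees
  have hrow1 : T.row1 = fun p : Fin (a + 1) => r1 a m' p.val := by
    funext p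
    simp only [r1]
    split_ifs with h
    · exact (key p).mpr h
    · have hpa : (p : ℕ) = a := by have := p.isLt; omega
      have : p = ⟨a, Nat.lt_succ_self a⟩ := Fin.ext hpa
      rw [this]
  -- row2 agrees via count uniqueness
  have hrow2 : T.row2 = fun p : Fin (b - 1) => r2 i j m' p.val := by
    refine mono_eq_of_counts T.row2_mono (r2_mono hb hi hij hjb hm'2 hm'b) ?_
    intro k
    have h1 := hT k
    simp only [TwoRowStandardTableau.content] at h1
    rw [hrow1] at h1
    rw [cnt1_eq hm'2 k] at h1
    rw [cnt2_eq hb hi hij hjb hm'2 hm'b k]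
    have h2 := sum_eq_target (a := a) hb hi hij hjb hm'2 hm'b k
    omega
  exact ext' hrow1 hrow2

end Stmt11Aux


/-- The number of standard tableaux of shape `μ = (a+1, b-1)` and content
`w_{ij} = (a, 1^{i-2}, 2, 1^{j-1-i}, 2, 1^{b-1-j})` (entry `1` appearing `a` times, entries
`i` and `j` twice each, and every other entry of `{2, …, b-1}` once) is `b - 2`. -/
theorem stmt_11 (a b i j n : ℕ) (hb : 3 ≤ b) (hi : 2 ≤ i) (hij : i < j) (hjb : j ≤ b - 1)
    (hμ : b - 1 < a + 1) (hn : a + b ≤ n) :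
    Nat.card {T : TwoRowStandardTableau (a + 1) (b - 1) n //
      ∀ k, T.content k =
        if k = 1 then a else if k = i ∨ k = j then 2
        else if 2 ≤ k ∧ k ≤ b - 1 then 1 else 0} =
      b - 2 := by
  classical
  let e1 : {T : TwoRowStandardTableau (a + 1) (b - 1) n //
      ∀ k, T.content k =
        if k = 1 then a else if k = i ∨ k = j then 2
        else if 2 ≤ k ∧ k ≤ b - 1 then 1 else 0} ≃ {m : ℕ // 2 ≤ m ∧ m ≤ b - 1} :=
  { toFun := fun T =>
      ⟨T.1.row1 ⟨a, Nat.lt_succ_self a⟩,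
        (Stmt11Aux.classify (hb := hb) (hi := hi) (hij := hij) (hjb := hjb) (hμ := hμ)
          (hn := hn) T.1 T.2).choose,
        (Stmt11Aux.classify (hb := hb) (hi := hi) (hij := hij) (hjb := hjb) (hμ := hμ)
          (hn := hn) T.1 T.2).choose_spec.choose⟩,
    invFun := fun m =>
      ⟨Stmt11Aux.mk a b i j n m.1 hb hi hij hjb hμ hn m.2.1 m.2.2,
        fun k => Stmt11Aux.content_mk k⟩,
    left_inv := fun T => Subtype.ext
      ((Stmt11Aux.classify (hb := hb) (hi := hi) (hij := hij) (hjb := hjb) (hμ := hμ)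
          (hn := hn) T.1 T.2).choose_spec.choose_spec).symm,
    right_inv := fun m => Subtype.ext (by
      show Stmt11Aux.r1 a m.1 a = m.1
      simp [Stmt11Aux.r1]) }
  let e2 : {m : ℕ // 2 ≤ m ∧ m ≤ b - 1} ≃ Fin (b - 2) :=
  { toFun := fun m => ⟨m.1 - 2, by have := m.2; omega⟩,
    invFun := fun v => ⟨(v : ℕ) + 2, by have := v.isLt; omega⟩,
    left_inv := fun m => Subtype.ext (by have := m.2; simp; omega),
    right_inv := fun v => Fin.ext (by simp) }
  rw [Nat.card_congr (e1.trans e2), Nat.card_eq_fintype_card, Fintype.card_fin]
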